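/- For a finite group G, the conjugacy super power graph P^c(G) equals the conjugacy super enhanced power graph P_e^c(G) if and only if every element of G has prime power order (i.e., for every x ∈ G, o(x) = p^k for some prime p and integer k ≥ 0). -/

import Mathlib

open Subgroup

lemma myIsConj_orderOf {G : Type*} [Group G] {x y : G} (h : IsConj x y) :
    orderOf x = orderOf y := by
  obtain ⟨c, hc⟩ := h
  exact SemiconjBy.orderOf_eq _ hc

lemma gcd_pow_mem (G : Type*) [Group G] (z : G) (a : ℤ) :
    z ^ (Int.gcd a (orderOf z) : ℤ) ∈ zpowers (z ^ a) := by
  rw [Int.gcd_eq_gcd_ab a (orderOf z)]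
  have h1 : z ^ (a * Int.gcdA a (orderOf z) + (orderOf z : ℤ) * Int.gcdB a (orderOf z))
      = (z ^ a) ^ Int.gcdA a (orderOf z) * (z ^ ((orderOf z : ℤ))) ^ Int.gcdB a (orderOf z) := by
    rw [zpow_add, zpow_mul, zpow_mul]
  rw [h1, zpow_natCast, pow_orderOf_eq_one, one_zpow, mul_one]
  exact zpow_mem (mem_zpowers _) _

lemma mem_zpowers_of_dvd {G : Type*} [Group G] (z : G) {d b : ℤ} (h : d ∣ b) :
    z ^ b ∈ zpowers (z ^ d) := by
  obtain ⟨c, hc⟩ := h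
  have : z ^ b = (z ^ d) ^ c := by rw [← zpow_mul, ← hc]
  rw [this]
  exact zpow_mem (mem_zpowers _) _

lemma mem_of_gcd_dvd {G : Type*} [Group G] (z : G) (a b : ℤ)
    (h : Int.gcd a (orderOf z) ∣ Int.gcd b (orderOf z)) :
    z ^ b ∈ zpowers (z ^ a) := by
  have h2 : z ^ b ∈ zpowers (z ^ (Int.gcd b (orderOf z) : ℤ)) :=
    mem_zpowers_of_dvd z (Int.gcd_dvd_left _ _)
  have h3 : z ^ ((Int.gcd b (orderOf z) : ℤ)) ∈ zpowers (z ^ ((Int.gcd a (orderOf z) : ℤ))) :=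
    mem_zpowers_of_dvd z (Int.natCast_dvd_natCast.mpr h)
  exact (zpowers_le.mpr ((zpowers_le.mpr (gcd_pow_mem G z a)) h3)) h2

lemma comparable_of_prime_pow {G : Type*} [Group G] {z x y : G} {p k : ℕ}
    (hp : p.Prime) (hz : orderOf z = p ^ k)
    (hx : x ∈ zpowers z) (hy : y ∈ zpowers z) :
    x ∈ zpowers y ∨ y ∈ zpowers x := by
  obtain ⟨a, rfl⟩ := hx
  obtain ⟨b, rfl⟩ := hy
  have ha : Int.gcd a (orderOf z) ∣ p ^ k := by
    rw [← hz]
    exact Int.natCast_dvd_natCast.mp (Int.gcd_dvd_right _ _)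
  have hb : Int.gcd b (orderOf z) ∣ p ^ k := by
    rw [← hz]
    exact Int.natCast_dvd_natCast.mp (Int.gcd_dvd_right _ _)
  obtain ⟨i, hik, hi⟩ := (Nat.dvd_prime_pow hp).mp ha
  obtain ⟨j, hjk, hj⟩ := (Nat.dvd_prime_pow hp).mp hb
  rcases le_total i j with hle | hle
  · right
    exact mem_of_gcd_dvd z a b (by rw [hi, hj]; exact pow_dvd_pow p hle)
  · left
    exact mem_of_gcd_dvd z b a (by rw [hi, hj]; exact pow_dvd_pow p hle)

/-- The power graph of a group `G`: distinct `x, y` are adjacent iff one is a power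
of the other, i.e. `x ∈ ⟨y⟩` or `y ∈ ⟨x⟩`. -/

def powerGraph (G : Type*) [Group G] : SimpleGraph G :=
  SimpleGraph.fromRel (fun x y => x ∈ Subgroup.zpowers y)

/-- The enhanced power graph of a group `G`: distinct `x, y` are adjacent iff they lie
in a common cyclic subgroup. -/
def enhancedPowerGraph (G : Type*) [Group G] : SimpleGraph G :=
  SimpleGraph.fromRel
    (fun x y => ∃ z : G, x ∈ Subgroup.zpowers z ∧ y ∈ Subgroup.zpowers z)

/-- The commuting graph of a group `G`: distinct `x, y` are adjacent iff they commute. -/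
def commutingGraph (G : Type*) [Group G] : SimpleGraph G :=
  SimpleGraph.fromRel (fun x y => x * y = y * x)

/-- The order super graph of a graph `A` on a group `G`: distinct `x, y` are adjacent iff
they have the same order, or some elements of the same orders are adjacent in `A`. -/
def orderSuper (G : Type*) [Group G] (A : SimpleGraph G) : SimpleGraph G :=
  SimpleGraph.fromRel (fun x y =>
    orderOf x = orderOf y ∨
      ∃ x' y' : G, orderOf x' = orderOf x ∧ orderOf y' = orderOf y ∧ A.Adj x' y')

/-- The conjugacy super graph of a graph `A` on a group `G`: distinct `x, y` are adjacent
iff they are conjugate, or some conjugates of them are adjacent in `A`. -/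
def conjSuper (G : Type*) [Group G] (A : SimpleGraph G) : SimpleGraph G :=
  SimpleGraph.fromRel (fun x y =>
    IsConj x y ∨ ∃ x' y' : G, IsConj x x' ∧ IsConj y y' ∧ A.Adj x' y')

/-- A vertex of a simple graph is dominant if it is adjacent to every other vertex. -/
def IsDominantVertex {V : Type*} (Γ : SimpleGraph V) (v : V) : Prop :=
  ∀ w, w ≠ v → Γ.Adj v w

/-- For a finite group `G`, the conjugacy super power graph equals the conjugacy super
enhanced power graph iff every element of `G` has prime power order. -/
theorem conjSuper_powerGraph_eq_conjSuper_enhancedPowerGraph_iff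
    (G : Type*) [Group G] [Fintype G] :
    conjSuper G (powerGraph G) = conjSuper G (enhancedPowerGraph G) ↔
      ∀ x : G, ∃ (p k : ℕ), p.Prime ∧ orderOf x = p ^ k := by
  constructor
  · intro h x
    by_contra hn
    push_neg at hn
    have hn0 : orderOf x ≠ 0 := (orderOf_pos x).ne'
    have hn1 : orderOf x ≠ 1 := fun h1 => hn 2 0 Nat.prime_two (by rw [h1, pow_zero])
    set n := orderOf x with hdefn
    set p := n.minFac with hdefp
    have hp : p.Prime := Nat.minFac_prime hn1
    set m := n / p ^ n.factorization p with hdefm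
    have hm1 : m ≠ 1 := by
      intro h1
      refine hn p (n.factorization p) hp ?_
      have h2 := Nat.ordProj_mul_ordCompl_eq_self n p
      rw [← hdefm] at h2
      rw [h1, mul_one] at h2
      exact h2.symm
    set q := m.minFac with hdefq
    have hq : q.Prime := Nat.minFac_prime hm1
    have hqm : q ∣ m := Nat.minFac_dvd m
    have hqn : q ∣ n := hqm.trans (Nat.ordCompl_dvd n p)
    have hpn : p ∣ n := Nat.minFac_dvd n
    have hpq : p ≠ q := by
      intro e
      have hpm : p ∣ m := by rw [e]; exact hqm
      rw [hdefm] at hpm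
      exact Nat.not_dvd_ordCompl hp hn0 hpm
    set a := x ^ (n / p) with hdefa
    set b := x ^ (n / q) with hdefb
    have hoa : orderOf a = p := orderOf_pow_orderOf_div hn0 hpn
    have hob : orderOf b = q := orderOf_pow_orderOf_div hn0 hqn
    have hab : a ≠ b := fun e => hpq (by rw [← hoa, ← hob, e])
    have key : ∀ (r s : ℕ), r.Prime → s.Prime → r ≠ s → ∀ u v : G,
        orderOf u = r → orderOf v = s →
        ¬ (IsConj u v ∨ ∃ u' v' : G, IsConj u u' ∧ IsConj v v' ∧ (powerGraph G).Adj u' v') := by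
      rintro r s hr hs hrs u v hu hv (hc | ⟨u', v', hcu, hcv, hAdj⟩)
      · exact hrs (by rw [← hu, ← hv, myIsConj_orderOf hc])
      · have hu' : orderOf u' = r := by rw [← (myIsConj_orderOf hcu), hu]
        have hv' : orderOf v' = s := by rw [← (myIsConj_orderOf hcv), hv]
        rw [powerGraph, SimpleGraph.fromRel_adj] at hAdj
        rcases hAdj.2 with hm | hm
        · have hd := orderOf_dvd_of_mem_zpowers hm
          rw [hu', hv'] at hd
          exact hrs ((Nat.prime_dvd_prime_iff_eq hr hs).mp hd)
        · have hd := orderOf_dvd_of_mem_zpowers hm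
          rw [hu', hv'] at hd
          exact hrs ((Nat.prime_dvd_prime_iff_eq hs hr).mp hd).symm
    have hadjE : (conjSuper G (enhancedPowerGraph G)).Adj a b := by
      rw [conjSuper, SimpleGraph.fromRel_adj]
      refine ⟨hab, Or.inl (Or.inr ⟨a, b, IsConj.refl a, IsConj.refl b, ?_⟩)⟩
      rw [enhancedPowerGraph, SimpleGraph.fromRel_adj]
      exact ⟨hab, Or.inl ⟨x, Subgroup.pow_mem _ (Subgroup.mem_zpowers x) _,
        Subgroup.pow_mem _ (Subgroup.mem_zpowers x) _⟩⟩
    rw [← h, conjSuper, SimpleGraph.fromRel_adj] at hadjE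
    rcases hadjE.2 with hc | hc
    · exact key p q hp hq hpq a b hoa hob hc
    · exact key q p hq hp (Ne.symm hpq) b a hob hoa hc
  · intro h
    ext u v
    rw [conjSuper, conjSuper, SimpleGraph.fromRel_adj, SimpleGraph.fromRel_adj]
    have step : ∀ u' v' : G, (powerGraph G).Adj u' v' ↔ (enhancedPowerGraph G).Adj u' v' := by
      intro u' v'
      rw [powerGraph, enhancedPowerGraph, SimpleGraph.fromRel_adj, SimpleGraph.fromRel_adj]
      constructor
      · rintro ⟨hne, hm | hm⟩
        · exact ⟨hne, Or.inl ⟨v', hm, Subgroup.mem_zpowers v'⟩⟩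
        · exact ⟨hne, Or.inl ⟨u', Subgroup.mem_zpowers u', hm⟩⟩
      · rintro ⟨hne, (⟨z, hz1, hz2⟩ | ⟨z, hz1, hz2⟩)⟩
        · obtain ⟨pp, kk, hpp, hzo⟩ := h z
          exact ⟨hne, comparable_of_prime_pow hpp hzo hz1 hz2⟩
        · obtain ⟨pp, kk, hpp, hzo⟩ := h z
          rcases comparable_of_prime_pow hpp hzo hz1 hz2 with hm | hm
          · exact ⟨hne, Or.inr hm⟩
          · exact ⟨hne, Or.inl hm⟩
    simp only [step]
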